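/- Let n ≥ 3 and let p, q be integers with 2 ≤ p < q ≤ n. Let i_p, i_q be integers with 1 ≤ i_p < p and 1 ≤ i_q < q, and suppose q - i_q ≤ i_p. Then in S_n the following exchange law holds: t_q^{i_q} · t_p^{i_p} = t_{p+i_q-q}^{i_q+i_p-q} · t_{i_q}^{p-i_p} · t_q^{i_q+i_p-p}. -/
import Mathlib


/- We work in the symmetric group on `Fin n` (representing `{1, ..., n}` via `i ↦ i - 1`).
The paper multiplies permutations left-to-right: `(π₁ · π₂)(i) = π₂(π₁(i))`,
while Mathlib's `*` on `Equiv.Perm` is function composition: `(π₁ * π₂)(i) = π₁(π₂(i))`.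
Hence a paper product `A · B · C` is rendered below as `C * B * A`. -/

/-- `sP n i` is the transposition `sᵢ = (i, i+1)` (1-indexed), for `1 ≤ i ≤ n - 1`. -/
def sP (n i : ℕ) : Equiv.Perm (Fin n) :=
  if h : 1 ≤ i ∧ i < n then
    Equiv.swap ⟨i - 1, lt_of_le_of_lt (Nat.sub_le i 1) h.2⟩ ⟨i, h.2⟩
  else 1

/-- `tP n m` is `t_m = s₁ · s₂ ⋯ s_{m-1}` (paper's left-to-right product, so here the
factor for larger index is multiplied on the left).  `tP n 0 = tP n 1 = 1`. -/
def tP (n m : ℕ) : Equiv.Perm (Fin n) :=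
  (List.range (m - 1)).foldl (fun g j => sP n (j + 1) * g) 1

/-- `uP n r` is `u_{2r} = t_{2r-2} · s_{2r-1}` (paper order; here reversed). -/
def uP (n r : ℕ) : Equiv.Perm (Fin n) := sP n (2 * r - 1) * tP n (2 * r - 2)

/-- `vP n r` is `v_{2r} = t_{2r}²`. -/
def vP (n r : ℕ) : Equiv.Perm (Fin n) := (tP n (2 * r)) ^ 2


lemma tP_succ (n m : ℕ) (hm : 1 ≤ m) : tP n (m + 1) = sP n m * tP n m := by
  unfold tP
  have h1 : m + 1 - 1 = (m - 1) + 1 := by omega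
  rw [h1, List.range_succ, List.foldl_append]
  simp only [List.foldl_cons, List.foldl_nil]
  congr 2
  omega

lemma sP_apply (n i : ℕ) (hi : 1 ≤ i) (hin : i < n) (x : Fin n) :
    ((sP n i) x).val = if x.val = i - 1 then i else if x.val = i then i - 1 else x.val := by
  unfold sP
  rw [dif_pos ⟨hi, hin⟩]
  rcases eq_or_ne x.val (i - 1) with h1 | h1
  · have hx : x = ⟨i - 1, lt_of_le_of_lt (Nat.sub_le i 1) hin⟩ := Fin.ext h1
    rw [hx, Equiv.swap_apply_left]
    simp only [Fin.val_mk] at h1 ⊢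
    split_ifs <;> omega
  · rcases eq_or_ne x.val i with h2 | h2
    · have hx : x = ⟨i, hin⟩ := Fin.ext h2
      rw [hx, Equiv.swap_apply_right]
      simp only [Fin.val_mk] at h2 ⊢
      split_ifs <;> omega
    · rw [Equiv.swap_apply_of_ne_of_ne
        (fun hc => h1 (by rw [hc])) (fun hc => h2 (by rw [hc]))]
      split_ifs <;> omega

lemma tP_apply (n m : ℕ) (hm : 1 ≤ m) (hmn : m ≤ n) (x : Fin n) :
    ((tP n m) x).val =
      if x.val < m then (if x.val = 0 then m - 1 else x.val - 1) else x.val := by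
  induction m with
  | zero => omega
  | succ m ih =>
    rcases Nat.eq_or_lt_of_le hm with h1 | h1
    · have ht : tP n 1 = 1 := by unfold tP; simp
      rw [← h1, ht]
      simp only [Equiv.Perm.coe_one, id_eq]
      split_ifs <;> omega
    · have hm1 : 1 ≤ m := by omega
      rw [tP_succ n m hm1, Equiv.Perm.mul_apply,
        sP_apply n m hm1 (by omega), ih hm1 (by omega)]
      split_ifs <;> omega

lemma tP_pow_apply (n m e : ℕ) (hm : 1 ≤ m) (hmn : m ≤ n) (he : e < m) (x : Fin n) :
    ((tP n m ^ e) x).val =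
      if x.val < m then (if e ≤ x.val then x.val - e else x.val + m - e) else x.val := by
  induction e with
  | zero =>
    simp only [pow_zero, Equiv.Perm.coe_one, id_eq]
    split_ifs <;> omega
  | succ e ih =>
    rw [pow_succ', Equiv.Perm.mul_apply, tP_apply n m hm hmn, ih (by omega)]
    split_ifs <;> omega

set_option maxHeartbeats 2000000 in

/-- exchange law, case `q - i_q ≤ i_p`:
`t_q^{i_q} · t_p^{i_p} = t_{p+i_q-q}^{i_q+i_p-q} · t_{i_q}^{p-i_p} · t_q^{i_q+i_p-p}` (paper
order; rendered here in composition order, i.e. reversed). -/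
theorem exchange_law_case3 (n p q ip iq : ℕ) (hn : 3 ≤ n)
    (hp : 2 ≤ p) (hpq : p < q) (hq : q ≤ n)
    (hip1 : 1 ≤ ip) (hip2 : ip < p) (hiq1 : 1 ≤ iq) (hiq2 : iq < q)
    (h : q - iq ≤ ip) :
    tP n p ^ ip * tP n q ^ iq =
      tP n q ^ (iq + ip - p) * tP n iq ^ (p - ip) * tP n (p + iq - q) ^ (iq + ip - q) := by
  apply Equiv.ext
  intro x
  apply Fin.val_injective
  simp only [Equiv.Perm.mul_apply]
  rw [tP_pow_apply n p ip (by omega) (by omega) hip2,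
    tP_pow_apply n q iq (by omega) hq hiq2,
    tP_pow_apply n q (iq + ip - p) (by omega) hq (by omega),
    tP_pow_apply n iq (p - ip) (by omega) (by omega) (by omega),
    tP_pow_apply n (p + iq - q) (iq + ip - q) (by omega) (by omega) (by omega)]
  split_ifs <;> omega
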